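/- The 3×3 matrix A = [[0,1,1],[2,0,1],[-1,-1,0]] is a semimonotone star matrix, but its inverse A^{-1} = (1/3)[[-1,1,-1],[1,-1,-2],[2,1,2]] is not a semimonotone star matrix. Hence a principal pivot transform of a semimonotone star matrix need not be semimonotone star. -/

import Mathlib

/-- A is semimonotone (E₀). -/
def IsSemimonotone {n : ℕ} (A : Matrix (Fin n) (Fin n) ℝ) : Prop :=
  ∀ x : Fin n → ℝ, 0 ≤ x → x ≠ 0 → ∃ i, 0 < x i ∧ 0 ≤ A.mulVec x i

/-- A is semimonotone star (E₀ˢ). -/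
def IsSemimonotoneStar {n : ℕ} (A : Matrix (Fin n) (Fin n) ℝ) : Prop :=
  IsSemimonotone A ∧
    ∀ x : Fin n → ℝ, 0 ≤ x → 0 ≤ A.mulVec x → dotProduct x (A.mulVec x) = 0 →
      A.transpose.mulVec x ≤ 0

theorem stmt5 :
    IsSemimonotoneStar !![(0 : ℝ), 1, 1; 2, 0, 1; -1, -1, 0] ∧
      (!![(0 : ℝ), 1, 1; 2, 0, 1; -1, -1, 0])⁻¹
        = (1 / 3 : ℝ) • !![(-1 : ℝ), 1, -1; 1, -1, -2; 2, 1, 2] ∧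
      ¬ IsSemimonotoneStar ((1 / 3 : ℝ) • !![(-1 : ℝ), 1, -1; 1, -1, -2; 2, 1, 2]) := by
  refine ⟨⟨?_, ?_⟩, ?_, ?_⟩
  · -- semimonotone
    intro x hx hne
    have hx' : ∀ i, 0 ≤ x i := fun i => by simpa using hx i
    by_cases h0 : 0 < x 0
    · refine ⟨0, h0, ?_⟩
      simp [Matrix.mulVec, dotProduct, Fin.sum_univ_three]
      linarith [hx' 1, hx' 2]
    · have hx0 : x 0 = 0 := le_antisymm (not_lt.mp h0) (hx' 0)
      by_cases h1 : 0 < x 1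
      · refine ⟨1, h1, ?_⟩
        simp [Matrix.mulVec, dotProduct, Fin.sum_univ_three]
        linarith [hx' 0, hx' 2]
      · have hx1 : x 1 = 0 := le_antisymm (not_lt.mp h1) (hx' 1)
        by_cases h2 : 0 < x 2
        · refine ⟨2, h2, ?_⟩
          simp [Matrix.mulVec, dotProduct, Fin.sum_univ_three]
          linarith [hx' 0, hx' 1]
        · have hx2 : x 2 = 0 := le_antisymm (not_lt.mp h2) (hx' 2)
          exact absurd (funext fun i => by fin_cases i <;> assumption) hne
  · -- star property
    intro x hx hAx _
    have hx' : ∀ i, 0 ≤ x i := fun i => by simpa using hx i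
    have h2 : (0:ℝ) ≤ -x 0 - x 1 := by
      have := hAx 2
      simpa [Matrix.mulVec, dotProduct, Fin.sum_univ_three] using this
    have hx0 : x 0 = 0 := by linarith [hx' 0, hx' 1]
    have hx1 : x 1 = 0 := by linarith [hx' 0, hx' 1]
    intro i
    fin_cases i <;>
      simp [Matrix.mulVec, dotProduct, Fin.sum_univ_three, Matrix.transpose,
        hx0, hx1] <;>
      linarith [hx' 2]
  · -- inverse computation
    apply Matrix.inv_eq_right_inv
    ext i j
    fin_cases i <;> fin_cases j <;>
      simp [Matrix.mul_apply, Fin.sum_univ_three] <;> norm_num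
  · -- B not semimonotone star
    rintro ⟨hsm, -⟩
    obtain ⟨i, hi, hBi⟩ := hsm ![1, 0, 0]
      (by intro i; fin_cases i <;> norm_num)
      (by
        intro h
        have := congrFun h 0
        norm_num at this)
    fin_cases i
    · simp [Matrix.mulVec, dotProduct, Fin.sum_univ_three] at hBi
      norm_num at hBi
    · norm_num at hi
    · norm_num at hi
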